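/- The MPLP++ iterates are bounded: for any pairwise graphical model (V, E, Y, θ) and any fixed edge ordering, there exists a constant C > 0 such that for every i ≥ 0 all entries of the cost vector H^i(θ) (all values θ^{(i)}_u(s) and θ^{(i)}_uv(s,t)) are bounded in absolute value by C. -/

import Mathlib

/-- Minimum of a real-valued function over a finite nonempty type. -/
noncomputable def fmin {Y : Type*} [Fintype Y] [Nonempty Y] (f : Y → ℝ) : ℝ :=
  Finset.univ.inf' Finset.univ_nonempty f

/-- The cost vector of a pairwise graphical model: unary costs for every vertex and
pairwise costs for every (potential) edge. -/
structure Costs (V Y : Type*) where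
  un : V → Y → ℝ
  pw : V × V → Y × Y → ℝ

/-- The dual value `D(θ) = Σ_u min_s θ_u(s) + Σ_{uv∈E} min_{(s,t)} θ_uv(s,t)`. -/
noncomputable def dual {V Y : Type*} [Fintype V] [Fintype Y] [Nonempty Y]
    (E : Finset (V × V)) (c : Costs V Y) : ℝ :=
  (∑ u, fmin (c.un u)) + ∑ e ∈ E, fmin (c.pw e)

/-- One MPLP++ edge update of the cost vector at edge `e = (u,v)`. -/
noncomputable def processEdge {V Y : Type*} [Fintype Y] [Nonempty Y] [DecidableEq V]
    (c : Costs V Y) (e : V × V) : Costs V Y :=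
  let g : Y × Y → ℝ := fun p => c.un e.1 p.1 + c.un e.2 p.2 + c.pw e p
  let θM : Y → ℝ := fun s => (1 / 2) * fmin (fun t => g (s, t))
  let θHv : Y → ℝ := fun t => fmin (fun s => g (s, t) - θM s)
  let θHu : Y → ℝ := fun s => fmin (fun t => g (s, t) - θHv t)
  { un := fun w => if w = e.1 then θHu else if w = e.2 then θHv else c.un w
    pw := fun e' => if e' = e then (fun p => g p - θHu p.1 - θHv p.2) else c.pw e' }

/-- One MPLP++ iteration `H`: process all edges in the given fixed order. -/
noncomputable def mplppIter {V Y : Type*} [Fintype Y] [Nonempty Y] [DecidableEq V]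
    (order : List (V × V)) (c : Costs V Y) : Costs V Y :=
  order.foldl processEdge c

set_option linter.unusedSectionVars false

section Aux
variable {Y : Type*} [Fintype Y] [Nonempty Y]

lemma fmin_le (f : Y → ℝ) (y : Y) : fmin f ≤ f y := Finset.inf'_le _ (Finset.mem_univ y)
lemma le_fmin {a : ℝ} (f : Y → ℝ) (h : ∀ y, a ≤ f y) : a ≤ fmin f :=
  Finset.le_inf' _ _ (fun y _ => h y)

variable (g : Y × Y → ℝ)
noncomputable def thM' : Y → ℝ := fun s => (1 / 2) * fmin (fun t => g (s, t))
noncomputable def thV' : Y → ℝ := fun t => fmin (fun s => g (s, t) - thM' g s)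
noncomputable def thU' : Y → ℝ := fun s => fmin (fun t => g (s, t) - thV' g t)

lemma thU_add_thV_le (s t : Y) : thU' g s + thV' g t ≤ g (s, t) := by
  have h := fmin_le (fun t => g (s, t) - thV' g t) t
  simp only [thU']; linarith

lemma half_le_thV (t : Y) : fmin g / 2 ≤ thV' g t := by
  apply le_fmin
  intro s
  have h1 : fmin (fun t' => g (s, t')) ≤ g (s, t) := fmin_le _ t
  have h2 : fmin g ≤ fmin (fun t' => g (s, t')) :=
    le_fmin _ (fun t' => fmin_le g (s, t'))
  simp only [thM']; linarith

lemma half_le_thU (s : Y) : fmin g / 2 ≤ thU' g s := by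
  apply le_fmin
  intro t
  have h1 : thV' g t ≤ g (s, t) - thM' g s := fmin_le _ s
  have h2 : fmin g ≤ fmin (fun t' => g (s, t')) :=
    le_fmin _ (fun t' => fmin_le g (s, t'))
  simp only [thM'] at h1 ⊢; linarith

end Aux

section Model
variable {V Y : Type*} [Fintype Y] [Nonempty Y] [DecidableEq V]

noncomputable def gfun (c : Costs V Y) (e : V × V) : Y × Y → ℝ :=
  fun p => c.un e.1 p.1 + c.un e.2 p.2 + c.pw e p

lemma processEdge_un (c : Costs V Y) (e : V × V) :
    (processEdge c e).un = fun w => if w = e.1 then thU' (gfun c e)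
      else if w = e.2 then thV' (gfun c e) else c.un w := rfl

lemma processEdge_pw (c : Costs V Y) (e : V × V) :
    (processEdge c e).pw = fun e' => if e' = e then
      (fun p => gfun c e p - thU' (gfun c e) p.1 - thV' (gfun c e) p.2)
      else c.pw e' := rfl

lemma processEdge_pw_self_nonneg (c : Costs V Y) (e : V × V) (p : Y × Y) :
    0 ≤ (processEdge c e).pw e p := by
  rw [processEdge_pw]
  simp only [eq_self_iff_true, if_true]
  have := thU_add_thV_le (gfun c e) p.1 p.2
  rw [Prod.mk.eta] at this
  linarith

lemma processEdge_pw_other (c : Costs V Y) {e e' : V × V} (h : e' ≠ e) :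
    (processEdge c e).pw e' = c.pw e' := by
  rw [processEdge_pw]; simp [h]

lemma processEdge_un_other (c : Costs V Y) {e : V × V} {w : V}
    (h1 : w ≠ e.1) (h2 : w ≠ e.2) : (processEdge c e).un w = c.un w := by
  rw [processEdge_un]; simp [h1, h2]

/-- Lower bound on the new unaries after processing an edge. -/
lemma processEdge_un_lb (c : Costs V Y) (e : V × V) {β : ℝ}
    (hall : ∀ w s, β ≤ c.un w s)
    (hpw : ∀ p, 0 ≤ c.pw e p) (w : V) (s : Y) : β ≤ (processEdge c e).un w s := by
  have hg : 2 * β ≤ fmin (gfun c e) := by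
    apply le_fmin
    intro p
    have := hall e.1 p.1; have := hall e.2 p.2; have := hpw p
    simp only [gfun]; linarith
  rw [processEdge_un]
  by_cases h1 : w = e.1
  · simp only [if_pos h1]
    have := half_le_thU (gfun c e) s
    linarith
  · simp only [if_neg h1]
    by_cases h2 : w = e.2
    · simp only [if_pos h2]
      have := half_le_thV (gfun c e) s
      linarith
    · simp only [if_neg h2]; exact hall w s
end Model
section Model2
variable {V Y : Type*} [Fintype Y] [Nonempty Y] [DecidableEq V] [Fintype V]

noncomputable def energy (E : Finset (V × V)) (c : Costs V Y) (x : V → Y) : ℝ :=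
  (∑ u, c.un u (x u)) + ∑ e ∈ E, c.pw e (x e.1, x e.2)

lemma processEdge_energy (E : Finset (V × V)) (c : Costs V Y) {e : V × V}
    (heE : e ∈ E) (hne : e.1 ≠ e.2) (x : V → Y) :
    energy E (processEdge c e) x = energy E c x := by
  have hun : ∑ u, ((processEdge c e).un u (x u) - c.un u (x u))
      = (thU' (gfun c e) (x e.1) - c.un e.1 (x e.1))
        + (thV' (gfun c e) (x e.2) - c.un e.2 (x e.2)) := by
    rw [← Finset.sum_subset (Finset.subset_univ ({e.1, e.2} : Finset V))]
    · rw [Finset.sum_pair hne, processEdge_un]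
      simp [hne, Ne.symm hne]
    · intro w _ hw
      simp only [Finset.mem_insert, Finset.mem_singleton, not_or] at hw
      rw [processEdge_un_other c hw.1 hw.2]; ring
  have hpw : ∑ e' ∈ E, ((processEdge c e).pw e' (x e'.1, x e'.2) - c.pw e' (x e'.1, x e'.2))
      = (gfun c e (x e.1, x e.2) - thU' (gfun c e) (x e.1) - thV' (gfun c e) (x e.2))
        - c.pw e (x e.1, x e.2) := by
    rw [← Finset.sum_subset (Finset.singleton_subset_iff.2 heE)]
    · rw [Finset.sum_singleton, processEdge_pw]; simp
    · intro e' _ he'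
      simp only [Finset.mem_singleton] at he'
      rw [processEdge_pw_other c he']; ring
  rw [Finset.sum_sub_distrib] at hun hpw
  simp only [gfun] at hpw
  unfold energy
  linarith

lemma foldl_energy (E : Finset (V × V)) (hE : ∀ e ∈ E, e.1 ≠ e.2) (x : V → Y) :
    ∀ (l : List (V × V)), (∀ e ∈ l, e ∈ E) → ∀ c : Costs V Y,
      energy E (l.foldl processEdge c) x = energy E c x := by
  intro l
  induction l with
  | nil => intro _ c; rfl
  | cons e l ih =>
    intro h c
    have heE : e ∈ E := h e List.mem_cons_self
    rw [List.foldl_cons, ih (fun e' he' => h e' (List.mem_cons_of_mem _ he')),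
      processEdge_energy E c heE (hE e heE) x]

lemma foldl_pw_untouched (e : V × V) :
    ∀ (l : List (V × V)), e ∉ l → ∀ c : Costs V Y,
      (l.foldl processEdge c).pw e = c.pw e := by
  intro l
  induction l with
  | nil => intro _ c; rfl
  | cons e' l ih =>
    intro h c
    rw [List.foldl_cons, ih (fun hm => h (List.mem_cons_of_mem _ hm)),
      processEdge_pw_other c (fun heq => h (by rw [heq]; exact List.mem_cons_self))]

lemma foldl_pw_nonneg :
    ∀ (l : List (V × V)), l.Nodup → ∀ (c : Costs V Y) (e : V × V), e ∈ l →
      ∀ p, 0 ≤ (l.foldl processEdge c).pw e p := by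
  intro l
  induction l with
  | nil => intro _ c e he; exact absurd he List.not_mem_nil
  | cons e' l ih =>
    intro hnd c e he p
    rw [List.foldl_cons]
    rcases List.mem_cons.1 he with h | h
    · subst h
      rw [foldl_pw_untouched e l (List.Nodup.notMem hnd) _]
      exact processEdge_pw_self_nonneg c e p
    · exact ih (List.Nodup.of_cons hnd) _ e h p

omit [Fintype V] in
lemma foldl_J (E : Finset (V × V)) (β : ℝ) :
    ∀ (l : List (V × V)), (∀ e ∈ l, e ∈ E) → ∀ c : Costs V Y,
      (∀ e ∈ E, ∀ p, 0 ≤ c.pw e p) → (∀ u s, β ≤ c.un u s) →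
      (∀ e ∈ E, ∀ p, 0 ≤ (l.foldl processEdge c).pw e p) ∧
        (∀ u s, β ≤ (l.foldl processEdge c).un u s) := by
  intro l
  induction l with
  | nil => intro _ c h2 h3; exact ⟨h2, h3⟩
  | cons e l ih =>
    intro h c h2 h3
    have heE : e ∈ E := h e List.mem_cons_self
    rw [List.foldl_cons]
    refine ih (fun e' he' => h e' (List.mem_cons_of_mem _ he')) _ ?_ ?_
    · intro e' he' p
      by_cases hee : e' = e
      · subst hee; exact processEdge_pw_self_nonneg c e' p
      · rw [processEdge_pw_other c hee]; exact h2 e' he' p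
    · exact processEdge_un_lb c e h3 (h2 e heE)

end Model2

/-- The MPLP++ iterates are bounded: all entries of every iterate are bounded in
absolute value by a single constant `C > 0`. -/
theorem mplpp_iterates_bounded {V Y : Type*} [Fintype V] [Fintype Y] [Nonempty Y] [DecidableEq V]
    (E : Finset (V × V)) (hE : ∀ e ∈ E, e.1 ≠ e.2)
    (order : List (V × V)) (horder : ∀ e, e ∈ order ↔ e ∈ E) (hnodup : order.Nodup)
    (c : Costs V Y) :
    ∃ C : ℝ, 0 < C ∧ ∀ i : ℕ,
      (∀ u s, |((mplppIter order)^[i] c).un u s| ≤ C) ∧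
      (∀ e ∈ E, ∀ p, |((mplppIter order)^[i] c).pw e p| ≤ C) := by
  by_cases hV : Nonempty V
  case neg =>
    exact ⟨1, one_pos, fun i => ⟨fun u => absurd ⟨u⟩ hV, fun e _ => absurd ⟨e.1⟩ hV⟩⟩
  haveI := hV
  have y0 : Y := Classical.arbitrary Y
  have u0 : V := Classical.arbitrary V
  set c1 : Costs V Y := mplppIter order c with hc1
  set β : ℝ := Finset.univ.inf' Finset.univ_nonempty (fun q : V × Y => c1.un q.1 q.2) with hβ
  set M : ℝ := Finset.univ.sup' Finset.univ_nonempty (energy E c) with hM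
  set n : ℕ := Fintype.card V with hn
  set B0u : ℝ := Finset.univ.sup' Finset.univ_nonempty (fun q : V × Y => |c.un q.1 q.2|) with hB0u
  set B0p : ℝ := Finset.univ.sup' Finset.univ_nonempty
    (fun q : (V × V) × (Y × Y) => |c.pw q.1 q.2|) with hB0p
  have hor : ∀ e ∈ order, e ∈ E := fun e he => (horder e).1 he
  -- nonnegativity facts
  have hB0u0 : 0 ≤ B0u := le_trans (abs_nonneg _)
    (Finset.le_sup' (fun q : V × Y => |c.un q.1 q.2|) (Finset.mem_univ (u0, y0)))
  have hB0p0 : 0 ≤ B0p := le_trans (abs_nonneg _)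
    (Finset.le_sup' (fun q : (V × V) × (Y × Y) => |c.pw q.1 q.2|)
      (Finset.mem_univ ((u0, u0), (y0, y0))))
  have hMabs : M ≤ |M| := le_abs_self M
  have hβ1 : -|β| ≤ β := neg_abs_le β
  have hβ2 : β ≤ |β| := le_abs_self β
  have hβ0 : 0 ≤ |β| := abs_nonneg β
  have hcast0 : (0:ℝ) ≤ ((n - 1 : ℕ) : ℝ) := Nat.cast_nonneg _
  have hcast1 : ((n - 1 : ℕ) : ℝ) ≤ (n : ℝ) + 1 := by
    have h1 : ((n - 1 : ℕ) : ℝ) ≤ (n : ℝ) := Nat.cast_le.2 (Nat.sub_le n 1)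
    linarith
  have hcastn : (0:ℝ) ≤ (n : ℝ) := Nat.cast_nonneg _
  have habsM0 : (0:ℝ) ≤ |M| := abs_nonneg M
  have hprod0 : (0:ℝ) ≤ ((n : ℝ) + 1) * |β| := by positivity
  have hprodn : (0:ℝ) ≤ (n : ℝ) * |β| := mul_nonneg hcastn hβ0
  have hp1 : -(((n - 1 : ℕ) : ℝ) * β) ≤ ((n : ℝ) + 1) * |β| := by
    have h1 : ((n - 1 : ℕ) : ℝ) * (-β) ≤ ((n - 1 : ℕ) : ℝ) * |β| :=
      mul_le_mul_of_nonneg_left (by linarith) hcast0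
    have h2 : ((n - 1 : ℕ) : ℝ) * |β| ≤ ((n : ℝ) + 1) * |β| :=
      mul_le_mul_of_nonneg_right hcast1 hβ0
    nlinarith
  have hp2 : -((n : ℝ) * β) ≤ ((n : ℝ) + 1) * |β| := by
    have h1 : (n : ℝ) * (-β) ≤ (n : ℝ) * |β| :=
      mul_le_mul_of_nonneg_left (by linarith) hcastn
    nlinarith
  refine ⟨1 + B0u + B0p + |M| + ((n : ℝ) + 1) * |β|, by linarith, ?_⟩
  set C : ℝ := 1 + B0u + B0p + |M| + ((n : ℝ) + 1) * |β| with hC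
  -- key invariant from iteration 1 onwards
  have key : ∀ j : ℕ,
      (∀ e ∈ E, ∀ p, 0 ≤ ((mplppIter order)^[j] c1).pw e p) ∧
      (∀ u s, β ≤ ((mplppIter order)^[j] c1).un u s) := by
    intro j
    induction j with
    | zero =>
      simp only [Function.iterate_zero, id_eq]
      constructor
      · intro e heE p
        exact foldl_pw_nonneg order hnodup c e ((horder e).2 heE) p
      · intro u s
        exact Finset.inf'_le (fun q : V × Y => c1.un q.1 q.2) (Finset.mem_univ (u, s))
    | succ j ih =>
      rw [Function.iterate_succ_apply']
      exact foldl_J E β order hor _ ih.1 ih.2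
  -- energy invariance
  have hen : ∀ (i : ℕ) (x : V → Y), energy E ((mplppIter order)^[i] c) x = energy E c x := by
    intro i
    induction i with
    | zero => intro x; rfl
    | succ i ih =>
      intro x
      rw [Function.iterate_succ_apply', mplppIter, foldl_energy E hE x order hor, ih]
  -- bounds for any state satisfying the invariants
  have bounds : ∀ c' : Costs V Y, (∀ x, energy E c' x = energy E c x) →
      (∀ e ∈ E, ∀ p, 0 ≤ c'.pw e p) → (∀ u s, β ≤ c'.un u s) →
      (∀ u s, |c'.un u s| ≤ C) ∧ (∀ e ∈ E, ∀ p, |c'.pw e p| ≤ C) := by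
    intro c' hinv hpw hun
    have hMx : ∀ x, energy E c' x ≤ M := by
      intro x
      rw [hinv x]
      exact Finset.le_sup' (energy E c) (Finset.mem_univ x)
    constructor
    · intro u s
      set x : V → Y := fun w => if w = u then s else y0 with hx
      have h1 : ∑ w, c'.un w (x w) ≤ energy E c' x := by
        have h0 : 0 ≤ ∑ e ∈ E, c'.pw e (x e.1, x e.2) :=
          Finset.sum_nonneg (fun e he => hpw e he _)
        unfold energy
        linarith
      have h2 : ((n - 1 : ℕ) : ℝ) * β + c'.un u s ≤ ∑ w, c'.un w (x w) := by
        rw [← Finset.sum_erase_add Finset.univ _ (Finset.mem_univ u)]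
        have h3 : ((Finset.univ.erase u).card : ℝ) * β ≤ ∑ w ∈ Finset.univ.erase u, c'.un w (x w) := by
          have := Finset.card_nsmul_le_sum (Finset.univ.erase u)
            (fun w => c'.un w (x w)) β (fun w _ => hun w (x w))
          rwa [nsmul_eq_mul] at this
        rw [Finset.card_erase_of_mem (Finset.mem_univ u), Finset.card_univ] at h3
        have h4 : c'.un u (x u) = c'.un u s := by rw [hx]; simp
        linarith
      have h5 : β ≤ c'.un u s := hun u s
      have h6 : c'.un u s ≤ M - ((n - 1 : ℕ) : ℝ) * β := by
        have := hMx x; linarith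
      rw [abs_le]
      refine ⟨by linarith, by linarith⟩
    · intro e heE p
      have hne := hE e heE
      set x : V → Y := fun w => if w = e.1 then p.1 else if w = e.2 then p.2 else y0 with hx
      have hxe : (x e.1, x e.2) = p := by
        have h1 : x e.1 = p.1 := by rw [hx]; simp
        have h2 : x e.2 = p.2 := by rw [hx]; simp [Ne.symm hne]
        rw [h1, h2]
      have h1 : (n : ℝ) * β ≤ ∑ w, c'.un w (x w) := by
        have := Finset.card_nsmul_le_sum Finset.univ
          (fun w => c'.un w (x w)) β (fun w _ => hun w (x w))
        rwa [nsmul_eq_mul, Finset.card_univ] at this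
      have h2 : c'.pw e p ≤ ∑ e' ∈ E, c'.pw e' (x e'.1, x e'.2) := by
        have h := Finset.single_le_sum (f := fun e' => c'.pw e' (x e'.1, x e'.2))
          (fun e' he' => hpw e' he' _) heE
        rwa [hxe] at h
      have h3 : c'.pw e p ≤ M - (n : ℝ) * β := by
        have := hMx x
        unfold energy at this
        linarith
      have h4 : 0 ≤ c'.pw e p := hpw e heE p
      rw [abs_le]
      refine ⟨by linarith, by linarith⟩
  intro i
  cases i with
  | zero =>
    simp only [Function.iterate_zero, id_eq]
    constructor
    · intro u s
      have h := Finset.le_sup' (fun q : V × Y => |c.un q.1 q.2|) (Finset.mem_univ (u, s))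
      simp only at h
      rw [← hB0u] at h
      linarith
    · intro e _ p
      have h := Finset.le_sup' (fun q : (V × V) × (Y × Y) => |c.pw q.1 q.2|)
        (Finset.mem_univ (e, p))
      simp only at h
      rw [← hB0p] at h
      linarith
  | succ j =>
    have hrw : (mplppIter order)^[j + 1] c = (mplppIter order)^[j] c1 := by
      rw [Function.iterate_succ_apply]
    have henj : ∀ x, energy E ((mplppIter order)^[j] c1) x = energy E c x := by
      intro x
      rw [← hrw]
      exact hen (j + 1) x
    have := bounds ((mplppIter order)^[j] c1) henj (key j).1 (key j).2
    rw [hrw]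
    exact this
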